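/- Partial-to-full augmenting set extraction (existence version): given a partial augmenting set Φ = (B1, A1, B2) in G(S) (where shortest augmenting paths have length 4), there exist subsets B1' ⊆ B1 and A1' ⊆ A1 such that (B1', A1', B2) is an augmenting set of width |B2|. -/

import Mathlib

open Set

variable {α : Type*}

/-- Vertices of the exchange graph: `Sum.inl v` is an element of the ground set,
`Sum.inr false` is the source `s`, `Sum.inr true` is the sink `t`. -/
abbrev ExV (α : Type*) := α ⊕ Bool

/-- Adjacency in the exchange graph `G(S)` of the common independent set `S`. -/
def exAdj (M₁ M₂ : Matroid α) (S : Set α) : ExV α → ExV α → Prop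
  | Sum.inl u, Sum.inl v =>
      (u ∈ S ∧ v ∉ S ∧ M₁.Indep (insert v (S \ {u}))) ∨
      (u ∉ S ∧ v ∈ S ∧ M₂.Indep (insert u (S \ {v})))
  | Sum.inr false, Sum.inl v => v ∉ S ∧ M₁.Indep (insert v S)
  | Sum.inl v, Sum.inr true => v ∉ S ∧ M₂.Indep (insert v S)
  | _, _ => False

/-- `l` is an `(s,t)`-path (list of vertices) in the exchange graph `G(S)`.
Its length (number of edges) is `l.length - 1`. -/
def IsSTPath (M₁ M₂ : Matroid α) (S : Set α) (l : List (ExV α)) : Prop :=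
  l.Chain' (exAdj M₁ M₂ S) ∧ l.head? = some (Sum.inr false) ∧
    l.getLast? = some (Sum.inr true)

/-- `l` is a path from `s` to the element `v` in the exchange graph `G(S)`. -/
def IsSPathTo (M₁ M₂ : Matroid α) (S : Set α) (v : α) (l : List (ExV α)) : Prop :=
  l.Chain' (exAdj M₁ M₂ S) ∧ l.head? = some (Sum.inr false) ∧
    l.getLast? = some (Sum.inl v)

/-- `v` is at distance exactly `i` from `s` in the exchange graph `G(S)`;
i.e. `v ∈ D_i`. -/
def InLayer (M₁ M₂ : Matroid α) (S : Set α) (i : ℕ) (v : α) : Prop :=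
  (∃ l, IsSPathTo M₁ M₂ S v l ∧ l.length = i + 1) ∧
    ∀ l, IsSPathTo M₁ M₂ S v l → i + 1 ≤ l.length

/-- Shortest `(s,t)`-paths in `G(S)` have length exactly `4`. -/
def ShortestAugLenFour (M₁ M₂ : Matroid α) (S : Set α) : Prop :=
  (∃ l, IsSTPath M₁ M₂ S l ∧ l.length = 5) ∧
    ∀ l, IsSTPath M₁ M₂ S l → 5 ≤ l.length

/-- `(B₁, A₁, B₂)` is an augmenting set in `G(S)`. -/
def IsAugSet (M₁ M₂ : Matroid α) (S B₁ A₁ B₂ : Set α) : Prop :=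
  (∀ v ∈ B₁, InLayer M₁ M₂ S 1 v) ∧ (∀ v ∈ A₁, InLayer M₁ M₂ S 2 v) ∧
  (∀ v ∈ B₂, InLayer M₁ M₂ S 3 v) ∧
  B₁.ncard = A₁.ncard ∧ A₁.ncard = B₂.ncard ∧
  M₁.Indep (S ∪ B₁) ∧ M₂.Indep ((S ∪ B₁) \ A₁) ∧
  M₁.Indep ((S \ A₁) ∪ B₂) ∧ M₂.Indep (S ∪ B₂)

/-- The rank of a set `X` in a matroid `M`: the maximum size of an independent
subset of `X`. -/
noncomputable def mRank (M : Matroid α) (X : Set α) : ℕ :=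
  sSup {n | ∃ I, I ⊆ X ∧ M.Indep I ∧ I.ncard = n}

lemma layer2_mem_S (M₁ M₂ : Matroid α) (S : Set α) (v : α)
    (h : InLayer M₁ M₂ S 2 v) : v ∈ S := by
  obtain ⟨⟨l, ⟨hc, hh, hl⟩, hlen⟩, -⟩ := h
  obtain ⟨a, b, c, rfl⟩ := List.length_eq_three.mp hlen
  have ha : a = Sum.inr false := by simpa using hh
  have hcv : c = Sum.inl v := by simpa using hl
  subst ha hcv
  rw [List.Chain', List.isChain_cons_cons, List.isChain_cons_cons] at hc
  obtain ⟨e1, e2, -⟩ := hc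
  rcases b with u | (_|_) <;> simp [exAdj] at e1 e2 <;> tauto

lemma layer3_not_mem_S (M₁ M₂ : Matroid α) (S : Set α) (v : α)
    (h : InLayer M₁ M₂ S 3 v) : v ∉ S := by
  obtain ⟨⟨l, ⟨hc, hh, hl⟩, hlen⟩, -⟩ := h
  rcases l with _ | ⟨a, _ | ⟨b, _ | ⟨c, _ | ⟨d, rest⟩⟩⟩⟩ <;> simp at hlen
  subst hlen
  have ha : a = Sum.inr false := by simpa using hh
  have hdv : d = Sum.inl v := by simpa using hl
  subst ha hdv
  rw [List.Chain', List.isChain_cons_cons, List.isChain_cons_cons, List.isChain_cons_cons] at hc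
  obtain ⟨e1, e2, e3, -⟩ := hc
  rcases b with u | (_|_) <;> rcases c with w | (_|_) <;>
    simp [exAdj] at e1 e2 e3 <;> tauto

/-- Extraction of a (full) augmenting set from a partial augmenting set: if
`Φ = (B₁, A₁, B₂)` is a partial augmenting set in `G(S)` (shortest augmenting
paths of length `4`), then there are `B₁' ⊆ B₁` and `A₁' ⊆ A₁` such that
`(B₁', A₁', B₂)` is an augmenting set of width `|B₂|`. -/
theorem partial_to_full_augset {α : Type*} (M₁ M₂ : Matroid α)
    (hE : M₂.E = M₁.E) (hfin : M₁.E.Finite)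
    (S : Set α) (hS₁ : M₁.Indep S) (hS₂ : M₂.Indep S)
    (hlen : ShortestAugLenFour M₁ M₂ S)
    (B₁ A₁ B₂ : Set α)
    (hB₁ : ∀ v ∈ B₁, InLayer M₁ M₂ S 1 v)
    (hA₁ : ∀ v ∈ A₁, InLayer M₁ M₂ S 2 v)
    (hB₂ : ∀ v ∈ B₂, InLayer M₁ M₂ S 3 v)
    (hc₁ : A₁.ncard ≤ B₁.ncard) (hc₂ : B₂.ncard ≤ A₁.ncard)
    (h1 : M₁.Indep (S ∪ B₁))
    (h2 : mRank M₂ ((S ∪ B₁) \ A₁) = mRank M₂ S)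
    (h3 : M₁.Indep ((S \ A₁) ∪ B₂))
    (h4 : M₂.Indep (S ∪ B₂)) :
    ∃ B₁' ⊆ B₁, ∃ A₁' ⊆ A₁,
      IsAugSet M₁ M₂ S B₁' A₁' B₂ ∧ B₁'.ncard = B₂.ncard := by
  have hA₁S : A₁ ⊆ S := fun v hv => layer2_mem_S M₁ M₂ S v (hA₁ v hv)
  have hB₂S : ∀ v ∈ B₂, v ∉ S := fun v hv => layer3_not_mem_S M₁ M₂ S v (hB₂ v hv)
  have hB₂disj : Disjoint S B₂ := disjoint_left.mpr fun {a} ha hb => hB₂S a hb ha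
  have hSE : S ⊆ M₁.E := hS₁.subset_ground
  have hSfin : S.Finite := hfin.subset hSE
  have hB₂E : B₂ ⊆ M₁.E := fun v hv => h3.subset_ground (Or.inr hv)
  have hB₂fin : B₂.Finite := hfin.subset hB₂E
  have hB₁E : B₁ ⊆ M₂.E := by
    rw [hE]; exact fun v hv => h1.subset_ground (Or.inr hv)
  -- Step A: a basis `J` of `S ∪ B₂` in `M₁` containing `(S \ A₁) ∪ B₂`
  obtain ⟨J, hJ, hIJ⟩ := h3.subset_isBasis_of_subset
    (union_subset_union_left B₂ diff_subset) (union_subset hSE hB₂E)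
  obtain ⟨J₀, hJ₀, hSJ₀⟩ := hS₁.subset_isBasis_of_subset
    (subset_union_left (s := S) (t := B₂)) (union_subset hSE hB₂E)
  have hJfin : J.Finite := hfin.subset hJ.indep.subset_ground
  have hJ₀fin : J₀.Finite := hfin.subset hJ₀.indep.subset_ground
  have hJcard : S.ncard ≤ J.ncard := by
    have h := hJ.encard_eq_encard hJ₀
    have h2 := ncard_le_ncard hSJ₀ hJ₀fin
    have hh : J.ncard = J₀.ncard := by rw [Set.ncard_def, Set.ncard_def, h]
    omega
  set A₃ := S \ J with hA₃def
  have hA₃A₁ : A₃ ⊆ A₁ := by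
    intro x hx
    by_contra hxA
    exact hx.2 (hIJ (Or.inl ⟨hx.1, hxA⟩))
  have hJeq : J = (S \ A₃) ∪ B₂ := by
    ext x
    constructor
    · intro hx
      rcases hJ.subset hx with hxS | hxB
      · exact Or.inl ⟨hxS, fun h => h.2 hx⟩
      · exact Or.inr hxB
    · rintro (⟨hxS, hxA⟩ | hxB)
      · by_contra hxJ; exact hxA ⟨hxS, hxJ⟩
      · exact hIJ (Or.inr hxB)
  have hA₃card : A₃.ncard ≤ B₂.ncard := by
    have hdisj : Disjoint (S \ A₃) B₂ := hB₂disj.mono_left diff_subset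
    have e1 : J.ncard = (S \ A₃).ncard + B₂.ncard := by
      rw [hJeq, ncard_union_eq hdisj hSfin.diff hB₂fin]
    have e2 : (S \ A₃).ncard + A₃.ncard = S.ncard :=
      ncard_diff_add_ncard_of_subset diff_subset hSfin
    omega
  -- choose `A₁'`
  obtain ⟨A₁', hA₃A₁', hA₁'A₁, hA₁'card⟩ :=
    exists_subsuperset_card_eq hA₃A₁ hA₃card hc₂
  have hA₁'S : A₁' ⊆ S := hA₁'A₁.trans hA₁S
  have hM₁B₂ : M₁.Indep ((S \ A₁') ∪ B₂) := by
    apply hJ.indep.subset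
    rw [hJeq]
    exact union_subset_union_left B₂ (diff_subset_diff_right hA₃A₁')
  -- Step B: rank argument in `M₂`
  have hbdd : ∀ X : Set α, BddAbove {n | ∃ I, I ⊆ X ∧ M₂.Indep I ∧ I.ncard = n} := by
    intro X
    refine ⟨M₂.E.ncard, ?_⟩
    rintro n ⟨I, -, hI, rfl⟩
    exact ncard_le_ncard hI.subset_ground (hE ▸ hfin)
  have hrk : S.ncard ≤ mRank M₂ ((S ∪ B₁) \ A₁) := by
    rw [h2]
    exact le_csSup (hbdd S) ⟨S, Subset.rfl, hS₂, rfl⟩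
  have hne : {n | ∃ I, I ⊆ (S ∪ B₁) \ A₁ ∧ M₂.Indep I ∧ I.ncard = n}.Nonempty :=
    ⟨0, ∅, empty_subset _, M₂.empty_indep, by simp⟩
  obtain ⟨I, hIsub, hIind, hIcard⟩ :
      ∃ I, I ⊆ (S ∪ B₁) \ A₁ ∧ M₂.Indep I ∧ I.ncard = mRank M₂ ((S ∪ B₁) \ A₁) :=
    Nat.sSup_mem hne (hbdd _)
  have hIS : S.ncard ≤ I.ncard := hIcard ▸ hrk
  have hYE : (S ∪ B₁) \ A₁' ⊆ M₂.E :=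
    diff_subset.trans (union_subset (hE ▸ hSE) hB₁E)
  obtain ⟨K, hK, hSK⟩ := (hS₂.subset diff_subset).subset_isBasis_of_subset
    (diff_subset_diff_left subset_union_left) hYE
  obtain ⟨K', hK', hIK'⟩ := hIind.subset_isBasis_of_subset
    (hIsub.trans (diff_subset_diff_right hA₁'A₁)) hYE
  have hKfin : K.Finite := hfin.subset (hE ▸ hK.indep.subset_ground)
  have hKcard : S.ncard ≤ K.ncard := by
    have h := hK.encard_eq_encard hK'
    have hK'fin : K'.Finite := hfin.subset (hE ▸ hK'.indep.subset_ground)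
    have h2 := ncard_le_ncard hIK' hK'fin
    have hh : K.ncard = K'.ncard := by rw [Set.ncard_def, Set.ncard_def, h]
    omega
  set B₃ := K \ S with hB₃def
  have hB₃B₁ : B₃ ⊆ B₁ := by
    intro x hx
    rcases (hK.subset hx.1).1 with h | h
    · exact absurd h hx.2
    · exact h
  have hKeq : K = (S \ A₁') ∪ B₃ := by
    ext x
    constructor
    · intro hx
      by_cases hxS : x ∈ S
      · exact Or.inl ⟨hxS, fun hA => (hK.subset hx).2 hA⟩
      · exact Or.inr ⟨hx, hxS⟩
    · rintro (h | h)
      · exact hSK h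
      · exact h.1
  have hB₃card : B₂.ncard ≤ B₃.ncard := by
    have hdisj : Disjoint (S \ A₁') B₃ := disjoint_left.mpr fun {a} ha hb => hb.2 ha.1
    have hB₃fin : B₃.Finite := hKfin.diff
    have e1 : K.ncard = (S \ A₁').ncard + B₃.ncard := by
      rw [hKeq, ncard_union_eq hdisj hSfin.diff hB₃fin]
    have e2 : (S \ A₁').ncard + A₁'.ncard = S.ncard :=
      ncard_diff_add_ncard_of_subset hA₁'S hSfin
    omega
  obtain ⟨B₁', hB₁'B₃, hB₁'card⟩ := Set.exists_subset_card_eq hB₃card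
  have hB₁'B₁ : B₁' ⊆ B₁ := hB₁'B₃.trans hB₃B₁
  have hM₂B₁' : M₂.Indep ((S ∪ B₁') \ A₁') := by
    refine hK.indep.subset ?_
    rw [hKeq]
    intro x hx
    rcases hx.1 with h | h
    · exact Or.inl ⟨h, hx.2⟩
    · exact Or.inr (hB₁'B₃ h)
  refine ⟨B₁', hB₁'B₁, A₁', hA₁'A₁,
    ⟨fun v hv => hB₁ v (hB₁'B₁ hv), fun v hv => hA₁ v (hA₁'A₁ hv), hB₂,
      by rw [hB₁'card, hA₁'card], hA₁'card,
      h1.subset (union_subset_union_right S hB₁'B₁), hM₂B₁', hM₁B₂, h4⟩,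
    hB₁'card⟩
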